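/- Non-signaling LP equals the box formulation: for k ≤ |X|, the maximum of (1/k)∑_{x,y,i} W(y|x) P(x,i|i,y) over non-signaling boxes P(x,j|i,y) (i.e., conditional distributions on X×[k] given inputs [k]×Y whose marginal on x is independent of y and whose marginal on j is independent of i) equals S^NS(W,k), the value of the LP: maximize (1/k)∑_{x,y} W(y|x) r_{x,y} subject to ∑_x r_{x,y} ≤ 1 ∀y, ∑_x p_x = k, 0 ≤ r_{x,y} ≤ p_x ≤ 1. -/

import Mathlib

open Finset

lemma interp_sum {X : Type*} [Fintype X] (a b : X → ℝ) (hab : ∀ x, a x ≤ b x)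
    (c : ℝ) (h1 : ∑ x, a x ≤ c) (h2 : c ≤ ∑ x, b x) :
    ∃ p : X → ℝ, (∀ x, a x ≤ p x) ∧ (∀ x, p x ≤ b x) ∧ ∑ x, p x = c := by
  rcases eq_or_lt_of_le (h1.trans h2) with h | h
  · exact ⟨a, fun x => le_rfl, hab, le_antisymm h1 (h ▸ h2)⟩
  · have hd : (0:ℝ) < ∑ x, b x - ∑ x, a x := sub_pos.mpr h
    set t := (c - ∑ x, a x) / (∑ x, b x - ∑ x, a x) with ht
    have ht0 : 0 ≤ t := div_nonneg (sub_nonneg.mpr h1) hd.le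
    have ht1 : t ≤ 1 := (div_le_one hd).mpr (by linarith)
    refine ⟨fun x => a x + t * (b x - a x), ?_, ?_, ?_⟩
    · intro x
      dsimp only
      nlinarith [mul_nonneg ht0 (sub_nonneg.mpr (hab x))]
    · intro x
      dsimp only
      nlinarith [mul_le_mul_of_nonneg_right ht1 (sub_nonneg.mpr (hab x))]
    · have hmul : t * (∑ x, b x - ∑ x, a x) = c - ∑ x, a x :=
        div_mul_cancel₀ _ hd.ne'
      rw [Finset.sum_add_distrib, ← Finset.mul_sum, Finset.sum_sub_distrib, hmul]
      ring

lemma box_to_lp {X Y : Type*} [Fintype X] [Fintype Y] [Nonempty X] [Nonempty Y]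
    (W : X → Y → ℝ) (k : ℕ) (hk : 1 ≤ k) (hkX : k ≤ Fintype.card X)
    (P : Fin k → Y → X → Fin k → ℝ)
    (hP0 : ∀ i y x j, 0 ≤ P i y x j)
    (hPsum : ∀ i y, ∑ x, ∑ j, P i y x j = 1)
    (PA : Fin k → X → ℝ) (hPA : ∀ i y x, ∑ j, P i y x j = PA i x)
    (PB : Y → Fin k → ℝ) (hPB : ∀ i y j, ∑ x, P i y x j = PB y j) :
    ∃ r : X → Y → ℝ, ∃ p : X → ℝ,
      (∀ x y, 0 ≤ r x y) ∧ (∀ x y, r x y ≤ p x) ∧ (∀ x, p x ≤ 1) ∧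
      (∀ y, ∑ x, r x y ≤ 1) ∧ (∑ x, p x = k) ∧
      (1 / (k:ℝ)) * ∑ i, ∑ x, ∑ y, W x y * P i y x i
        = (1 / (k:ℝ)) * ∑ x, ∑ y, W x y * r x y := by
  classical
  obtain ⟨y₀⟩ := ‹Nonempty Y›
  have hkpos : 0 < k := hk
  have i₀ : Fin k := ⟨0, hkpos⟩
  set r : X → Y → ℝ := fun x y => ∑ i, P i y x i with hr
  set q : X → ℝ := fun x => ∑ i, PA i x with hq
  have hq_sum : ∑ x, q x = (k : ℝ) := by
    rw [Finset.sum_comm]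
    have : ∀ i : Fin k, ∑ x, PA i x = 1 := by
      intro i
      rw [← hPsum i y₀]
      exact Finset.sum_congr rfl (fun x _ => (hPA i y₀ x).symm)
    simp [this]
  have hr0 : ∀ x y, 0 ≤ r x y := fun x y =>
    Finset.sum_nonneg (fun i _ => hP0 i y x i)
  have hrq : ∀ x y, r x y ≤ q x := by
    intro x y
    apply Finset.sum_le_sum
    intro i _
    rw [← hPA i y x]
    exact Finset.single_le_sum (fun j _ => hP0 i y x j) (Finset.mem_univ i)
  have hr_sumx : ∀ y, ∑ x, r x y = 1 := by
    intro y
    rw [show ∑ x, r x y = ∑ i, ∑ x, P i y x i from Finset.sum_comm]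
    have h1 : ∀ i : Fin k, ∑ x, P i y x i = PB y i := fun i => hPB i y i
    have h2 : ∑ j, PB y j = 1 := by
      rw [show ∑ j, PB y j = ∑ j, ∑ x, P i₀ y x j from
        Finset.sum_congr rfl (fun j _ => (hPB i₀ y j).symm)]
      rw [Finset.sum_comm]
      exact hPsum i₀ y
    rw [Finset.sum_congr rfl (fun i _ => h1 i)]
    exact h2
  have hr1 : ∀ x y, r x y ≤ 1 := by
    intro x y
    rw [← hr_sumx y]
    exact Finset.single_le_sum (fun x' _ => hr0 x' y) (Finset.mem_univ x)
  -- interpolate p between min(q,1) and 1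
  obtain ⟨p, hp1, hp2, hp3⟩ := interp_sum (fun x => min (q x) 1) (fun _ => 1)
    (fun x => min_le_right _ _) (k : ℝ)
    (by
      calc ∑ x, min (q x) 1 ≤ ∑ x, q x :=
        Finset.sum_le_sum (fun x _ => min_le_left _ _)
      _ = (k:ℝ) := hq_sum)
    (by
      simp only [Finset.sum_const, Finset.card_univ, nsmul_eq_mul, mul_one]
      exact_mod_cast hkX)
  refine ⟨r, p, hr0, ?_, hp2, fun y => le_of_eq (hr_sumx y), hp3, ?_⟩
  · intro x y
    exact le_trans (le_min (hrq x y) (hr1 x y)) (hp1 x)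
  · congr 1
    rw [Finset.sum_comm]
    apply Finset.sum_congr rfl
    intro x _
    rw [Finset.sum_comm]
    apply Finset.sum_congr rfl
    intro y _
    rw [hr, Finset.mul_sum]

lemma lp_to_box {X Y : Type*} [Fintype X] [Fintype Y] [Nonempty Y]
    (W : X → Y → ℝ) (hW_nonneg : ∀ x y, 0 ≤ W x y) (hW_sum : ∀ x, ∑ y, W x y = 1)
    (k : ℕ) (hk : 1 ≤ k)
    (r : X → Y → ℝ) (p : X → ℝ)
    (hr0 : ∀ x y, 0 ≤ r x y) (hrp : ∀ x y, r x y ≤ p x) (hp1 : ∀ x, p x ≤ 1)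
    (hrsum : ∀ y, ∑ x, r x y ≤ 1) (hpsum : ∑ x, p x = (k:ℝ)) :
    ∃ P : Fin k → Y → X → Fin k → ℝ,
      (∀ i y x j, 0 ≤ P i y x j) ∧
      (∀ i y, ∑ x, ∑ j, P i y x j = 1) ∧
      (∃ PA : Fin k → X → ℝ, ∀ i y x, ∑ j, P i y x j = PA i x) ∧
      (∃ PB : Y → Fin k → ℝ, ∀ i y j, ∑ x, P i y x j = PB y j) ∧
      (1 / (k:ℝ)) * ∑ x, ∑ y, W x y * r x y ≤
        (1 / (k:ℝ)) * ∑ i, ∑ x, ∑ y, W x y * P i y x i := by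
  classical
  obtain ⟨y₀⟩ := ‹Nonempty Y›
  have hk0 : (0:ℝ) < k := by exact_mod_cast hk
  have key : ∀ y : Y, ∃ s : X → ℝ,
      (∀ x, r x y ≤ s x) ∧ (∀ x, s x ≤ p x) ∧ ∑ x, s x = 1 :=
    fun y => interp_sum (fun x => r x y) p (fun x => hrp x y) 1 (hrsum y)
      (by rw [hpsum]; exact_mod_cast hk)
  choose s hs1 hs2 hs3 using key
  have hs0 : ∀ y x, 0 ≤ s y x := fun y x => (hr0 x y).trans (hs1 y x)
  -- value comparison: r ≤ s pointwise
  have hval : ∑ x, ∑ y, W x y * r x y ≤ ∑ x, ∑ y, W x y * s y x := by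
    apply Finset.sum_le_sum; intro x _
    apply Finset.sum_le_sum; intro y _
    exact mul_le_mul_of_nonneg_left (hs1 y x) (hW_nonneg x y)
  rcases Nat.lt_or_ge k 2 with hk2 | hk2
  · -- k = 1
    have hk1 : k = 1 := le_antisymm (Nat.lt_succ_iff.mp hk2) hk
    subst hk1
    have hps : ∀ y x, p x = s y x := by
      intro y x
      have h0 : ∑ x, (p x - s y x) = 0 := by
        rw [Finset.sum_sub_distrib, hpsum, hs3]; norm_num
      have := (Finset.sum_eq_zero_iff_of_nonneg
        (fun x _ => sub_nonneg.mpr (hs2 y x))).mp h0 x (Finset.mem_univ x)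
      linarith
    refine ⟨fun _ _ x _ => p x, ?_, ?_, ⟨fun _ x => p x, ?_⟩,
      ⟨fun _ _ => 1, ?_⟩, ?_⟩
    · intro i y x j
      show 0 ≤ p x
      rw [hps y₀ x]; exact hs0 y₀ x
    · intro i y
      simpa using hpsum
    · intro i y x
      simp
    · intro i y j
      simpa using hpsum
    · simp only [Fin.sum_univ_one, Nat.cast_one, one_div, inv_one, one_mul]
      calc ∑ x, ∑ y, W x y * r x y ≤ ∑ x, ∑ y, W x y * s y x := hval
        _ = ∑ x, ∑ y, W x y * p x := by
            apply Finset.sum_congr rfl; intro x _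
            apply Finset.sum_congr rfl; intro y _
            rw [hps y x]
  · -- k ≥ 2
    have hk2' : (2:ℝ) ≤ (k:ℝ) := by exact_mod_cast hk2
    have hkne : (k:ℝ) ≠ 0 := ne_of_gt hk0
    have hk1ne : (k:ℝ) - 1 ≠ 0 := by linarith
    have hk1pos : (0:ℝ) ≤ (k:ℝ) - 1 := by linarith
    have expand : ∀ (A B : ℝ) (i : Fin k), (∑ j : Fin k, if j = i then A else B)
        = A + ((k:ℝ) - 1) * B := by
      intro A B i
      have h : ∀ j : Fin k, (if j = i then A else B) = B + (if j = i then A - B else 0) := by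
        intro j; split <;> ring
      rw [Finset.sum_congr rfl (fun j _ => h j), Finset.sum_add_distrib,
        Finset.sum_ite_eq' Finset.univ i (fun _ => A - B)]
      simp only [Finset.sum_const, Finset.card_univ, Fintype.card_fin, nsmul_eq_mul,
        Finset.mem_univ, if_true]
      ring
    refine ⟨fun i y x j => if j = i then s y x / (k:ℝ)
        else (p x - s y x) / ((k:ℝ) * ((k:ℝ) - 1)), ?_, ?_,
      ⟨fun i x => p x / (k:ℝ), ?_⟩, ⟨fun y j => 1 / (k:ℝ), ?_⟩, ?_⟩
    · intro i y x j
      dsimp only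
      split
      · exact div_nonneg (hs0 y x) hk0.le
      · exact div_nonneg (sub_nonneg.mpr (hs2 y x)) (mul_nonneg hk0.le hk1pos)
    · intro i y
      have hrow : ∀ x : X, (∑ j : Fin k, if j = i then s y x / (k:ℝ)
          else (p x - s y x) / ((k:ℝ) * ((k:ℝ) - 1))) = p x / (k:ℝ) := by
        intro x
        rw [expand]
        field_simp
        ring
      rw [Finset.sum_congr rfl (fun x _ => hrow x), ← Finset.sum_div, hpsum,
        div_self hkne]
    · intro i y x
      dsimp only
      rw [expand]
      field_simp
      ring
    · intro i y j
      dsimp only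
      by_cases h : j = i
      · simp only [h, if_true]
        rw [← Finset.sum_div, hs3]
      · simp only [h, if_false]
        rw [← Finset.sum_div, Finset.sum_sub_distrib, hpsum, hs3]
        field_simp
    · have hdiag : ∀ i : Fin k, (∑ x, ∑ y, W x y *
          (if i = i then s y x / (k:ℝ) else (p x - s y x) / ((k:ℝ) * ((k:ℝ) - 1))))
          = (∑ x, ∑ y, W x y * s y x) / (k:ℝ) := by
        intro i
        have h1 : (∑ x, ∑ y, W x y * (if i = i then s y x / (k:ℝ)
            else (p x - s y x) / ((k:ℝ) * ((k:ℝ) - 1))))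
            = ∑ x, ∑ y, (W x y * s y x) / (k:ℝ) :=
          Finset.sum_congr rfl (fun x _ => Finset.sum_congr rfl
            (fun y _ => by rw [if_pos rfl, mul_div_assoc]))
        rw [h1]
        simp only [← Finset.sum_div]
      have hfinal : (1 / (k:ℝ)) * ∑ x, ∑ y, W x y * r x y ≤
          (1 / (k:ℝ)) * ∑ i : Fin k, ∑ x, ∑ y, W x y *
            (if i = i then s y x / (k:ℝ) else (p x - s y x) / ((k:ℝ) * ((k:ℝ) - 1))) := by
        rw [Finset.sum_congr rfl (fun i _ => hdiag i)]
        simp only [Finset.sum_const, Finset.card_univ, Fintype.card_fin, nsmul_eq_mul]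
        rw [mul_div_cancel₀ _ hkne]
        exact mul_le_mul_of_nonneg_left hval (by positivity)
      exact hfinal

/-- Non-signaling (LP relaxation) value `S^NS(W,k)`. -/
noncomputable def SchanNS {X Y : Type*} [Fintype X] [Fintype Y] (W : X → Y → ℝ) (k : ℕ) : ℝ :=
  sSup { v : ℝ | ∃ r : X → Y → ℝ, ∃ p : X → ℝ,
    (∀ x y, 0 ≤ r x y) ∧ (∀ x y, r x y ≤ p x) ∧ (∀ x, p x ≤ 1) ∧
    (∀ y, ∑ x, r x y ≤ 1) ∧ (∑ x, p x = k) ∧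
    v = (1 / k) * ∑ x, ∑ y, W x y * r x y }

/-- the maximum success probability achievable with an arbitrary
non-signaling box between sender and receiver equals the LP value `S^NS(W,k)` (for
`k ≤ |X|`).  A box `P i y x j = P(x,j|i,y)` is non-signaling when its marginal on `x` is
independent of `y` and its marginal on `j` is independent of `i`. -/
theorem ns_box_eq_lp {X Y : Type*} [Fintype X] [Fintype Y] (W : X → Y → ℝ)
    (hW_nonneg : ∀ x y, 0 ≤ W x y) (hW_sum : ∀ x, ∑ y, W x y = 1)
    (k : ℕ) (hk : 1 ≤ k) (hkX : k ≤ Fintype.card X) :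
    sSup { v : ℝ | ∃ P : Fin k → Y → X → Fin k → ℝ,
        (∀ i y x j, 0 ≤ P i y x j) ∧
        (∀ i y, ∑ x, ∑ j, P i y x j = 1) ∧
        (∃ PA : Fin k → X → ℝ, ∀ i y x, ∑ j, P i y x j = PA i x) ∧
        (∃ PB : Y → Fin k → ℝ, ∀ i y j, ∑ x, P i y x j = PB y j) ∧
        v = (1 / k) * ∑ i, ∑ x, ∑ y, W x y * P i y x i } =
      SchanNS W k := by
  classical
  haveI hXne : Nonempty X := Fintype.card_pos_iff.mp (lt_of_lt_of_le hk hkX)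
  haveI hYne : Nonempty Y := by
    by_contra h
    haveI hempty : IsEmpty Y := not_nonempty_iff.mp h
    have := hW_sum (Classical.arbitrary X)
    simp at this
  have hk0 : (0:ℝ) < k := by exact_mod_cast hk
  have hk1 : 1 / (k:ℝ) ≤ 1 := by
    rw [div_le_one hk0]; exact_mod_cast hk
  rw [SchanNS]
  set LPset := { v : ℝ | ∃ r : X → Y → ℝ, ∃ p : X → ℝ,
    (∀ x y, 0 ≤ r x y) ∧ (∀ x y, r x y ≤ p x) ∧ (∀ x, p x ≤ 1) ∧
    (∀ y, ∑ x, r x y ≤ 1) ∧ (∑ x, p x = (k:ℝ)) ∧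
    v = (1 / (k:ℝ)) * ∑ x, ∑ y, W x y * r x y } with hLPdef
  set Box := { v : ℝ | ∃ P : Fin k → Y → X → Fin k → ℝ,
        (∀ i y x j, 0 ≤ P i y x j) ∧
        (∀ i y, ∑ x, ∑ j, P i y x j = 1) ∧
        (∃ PA : Fin k → X → ℝ, ∀ i y x, ∑ j, P i y x j = PA i x) ∧
        (∃ PB : Y → Fin k → ℝ, ∀ i y j, ∑ x, P i y x j = PB y j) ∧
        v = (1 / (k:ℝ)) * ∑ i, ∑ x, ∑ y, W x y * P i y x i } with hBoxdef
  -- LP nonempty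
  obtain ⟨t, -, hcard⟩ := Finset.exists_subset_card_eq (s := Finset.univ) (n := k) (by simpa using hkX)
  have hLPne : LPset.Nonempty := by
    refine ⟨0, fun _ _ => 0, fun x => if x ∈ t then 1 else 0, ?_, ?_, ?_, ?_, ?_, ?_⟩
    · intro x y; exact le_refl 0
    · intro x y; dsimp only; split <;> norm_num
    · intro x; dsimp only; split <;> norm_num
    · intro y; simp
    · simp only [Finset.sum_ite_mem, Finset.univ_inter, Finset.sum_const, nsmul_eq_mul,
        mul_one, hcard]
    · simp
  -- LP bounded above
  have hLPbdd : BddAbove LPset := by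
    refine ⟨(Fintype.card X : ℝ), ?_⟩
    rintro v ⟨r, p, hr0, hrp, hp1, hrs, hps, rfl⟩
    have hr1 : ∀ x y, r x y ≤ 1 := fun x y =>
      le_trans (Finset.single_le_sum (fun x' _ => hr0 x' y) (Finset.mem_univ x)) (hrs y)
    have hS0 : 0 ≤ ∑ x, ∑ y, W x y * r x y :=
      Finset.sum_nonneg fun x _ => Finset.sum_nonneg fun y _ =>
        mul_nonneg (hW_nonneg x y) (hr0 x y)
    have hS : ∑ x, ∑ y, W x y * r x y ≤ (Fintype.card X : ℝ) := by
      calc ∑ x, ∑ y, W x y * r x y ≤ ∑ x, ∑ y, W x y :=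
            Finset.sum_le_sum fun x _ => Finset.sum_le_sum fun y _ =>
              mul_le_of_le_one_right (hW_nonneg x y) (hr1 x y)
        _ = ∑ x : X, (1:ℝ) := Finset.sum_congr rfl fun x _ => hW_sum x
        _ = (Fintype.card X : ℝ) := by simp
    calc (1 / (k:ℝ)) * ∑ x, ∑ y, W x y * r x y
        ≤ 1 * ∑ x, ∑ y, W x y * r x y := mul_le_mul_of_nonneg_right hk1 hS0
      _ = ∑ x, ∑ y, W x y * r x y := one_mul _
      _ ≤ (Fintype.card X : ℝ) := hS
  -- Box bounded above
  have hBoxBdd : BddAbove Box := by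
    refine ⟨(Fintype.card X : ℝ), ?_⟩
    rintro v ⟨P, hP0, hPsum, ⟨PA, hPA⟩, ⟨PB, hPB⟩, rfl⟩
    have hP1 : ∀ i y x j, P i y x j ≤ 1 := by
      intro i y x j
      calc P i y x j ≤ ∑ j', P i y x j' :=
            Finset.single_le_sum (fun j' _ => hP0 i y x j') (Finset.mem_univ j)
        _ ≤ ∑ x', ∑ j', P i y x' j' :=
            Finset.single_le_sum
              (fun x' _ => Finset.sum_nonneg fun j' _ => hP0 i y x' j')
              (Finset.mem_univ x)
        _ = 1 := hPsum i y
    have hS : ∑ i, ∑ x, ∑ y, W x y * P i y x i ≤ (k:ℝ) * (Fintype.card X : ℝ) := by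
      calc ∑ i, ∑ x, ∑ y, W x y * P i y x i
          ≤ ∑ i : Fin k, ∑ x, ∑ y, W x y :=
            Finset.sum_le_sum fun i _ => Finset.sum_le_sum fun x _ =>
              Finset.sum_le_sum fun y _ =>
                mul_le_of_le_one_right (hW_nonneg x y) (hP1 i y x i)
        _ = ∑ i : Fin k, ∑ x : X, (1:ℝ) := by
            refine Finset.sum_congr rfl fun i _ => Finset.sum_congr rfl fun x _ => hW_sum x
        _ = (k:ℝ) * (Fintype.card X : ℝ) := by simp [mul_comm]
    calc (1 / (k:ℝ)) * ∑ i, ∑ x, ∑ y, W x y * P i y x i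
        ≤ (1 / (k:ℝ)) * ((k:ℝ) * (Fintype.card X : ℝ)) :=
          mul_le_mul_of_nonneg_left hS (by positivity)
      _ = (Fintype.card X : ℝ) := by field_simp
  -- Box nonempty
  have hBoxNe : Box.Nonempty := by
    obtain ⟨v, r, p, h1, h2, h3, h4, h5, rfl⟩ := hLPne
    obtain ⟨P, b1, b2, b3, b4, -⟩ := lp_to_box W hW_nonneg hW_sum k hk r p h1 h2 h3 h4 h5
    exact ⟨_, P, b1, b2, b3, b4, rfl⟩
  apply le_antisymm
  · refine csSup_le hBoxNe ?_
    rintro v ⟨P, hP0, hPsum, ⟨PA, hPA⟩, ⟨PB, hPB⟩, rfl⟩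
    obtain ⟨r, p, h1, h2, h3, h4, h5, heq⟩ := box_to_lp W k hk hkX P hP0 hPsum PA hPA PB hPB
    exact le_csSup hLPbdd ⟨r, p, h1, h2, h3, h4, h5, heq.symm ▸ rfl⟩
  · refine csSup_le hLPne ?_
    rintro v ⟨r, p, h1, h2, h3, h4, h5, rfl⟩
    obtain ⟨P, b1, b2, b3, b4, hle⟩ := lp_to_box W hW_nonneg hW_sum k hk r p h1 h2 h3 h4 h5
    exact le_trans hle (le_csSup hBoxBdd ⟨P, b1, b2, b3, b4, rfl⟩)
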